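/- Let π be a probability density on ℝ^d and let a > 1. Define μ(x) = ∫_{ℝ^d} π(y) N(x; y/a, (1−a^{−2}) I_d) dy, the density of a^{−1}Y + √(1−a^{−2}) Z where Y has density π and Z is an independent standard Gaussian. Then μ is continuously differentiable and, at every x with μ(x) > 0, its score satisfies ∇ log μ(x) = (a^{−1}/(1−a^{−2})) · E_{y ∼ m(·|x)}[y − a x], where m(·|x) is the probability density on ℝ^d proportional to y ↦ π(y) · N(y; a x, (a²−1) I_d). -/

import Mathlib

open MeasureTheory

/-- The multivariate Gaussian density `N(x; μ, Σ)` on `ℝ^d` (Euclidean space version). -/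
noncomputable def gaussDensityE {d : ℕ} (μ : EuclideanSpace ℝ (Fin d))
    (S : Matrix (Fin d) (Fin d) ℝ) (x : EuclideanSpace ℝ (Fin d)) : ℝ :=
  (2 * Real.pi) ^ (-(d : ℝ) / 2) * S.det ^ (-(1 : ℝ) / 2) *
    Real.exp (-(dotProduct (fun i => x i - μ i) (S⁻¹.mulVec (fun i => x i - μ i))) / 2)

lemma gauss_smul_one {d : ℕ} {c : ℝ} (hc : 0 < c) (m x : EuclideanSpace ℝ (Fin d)) :
    gaussDensityE m (c • 1) x =
      (2 * Real.pi * c) ^ (-(d : ℝ) / 2) * Real.exp (-‖x - m‖ ^ 2 / (2 * c)) := by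
  have hdet : (c • (1 : Matrix (Fin d) (Fin d) ℝ)).det = c ^ d := by
    simp [Matrix.det_smul]
  have hinv : (c • (1 : Matrix (Fin d) (Fin d) ℝ))⁻¹ = c⁻¹ • 1 := by
    apply Matrix.inv_eq_right_inv
    rw [Matrix.smul_mul, Matrix.mul_smul, Matrix.one_mul, smul_smul,
      mul_inv_cancel₀ hc.ne', one_smul]
  have hnorm : ‖x - m‖ ^ 2 = ∑ i, (x i - m i) ^ 2 := by
    rw [EuclideanSpace.norm_eq, Real.sq_sqrt (by positivity)]
    simp [sub_sq]
  unfold gaussDensityE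
  rw [hdet, hinv]
  have hmv : (c⁻¹ • (1 : Matrix (Fin d) (Fin d) ℝ)).mulVec (fun i => x i - m i)
      = c⁻¹ • fun i => x i - m i := by
    rw [Matrix.smul_mulVec, Matrix.one_mulVec]
  rw [hmv]
  have hdot : dotProduct (fun i => x i - m i) (c⁻¹ • fun i => x i - m i)
      = c⁻¹ * ∑ i, (x i - m i) ^ 2 := by
    simp [dotProduct, Finset.mul_sum, sq, mul_left_comm]
  rw [hdot, ← hnorm]
  have h1 : ((c : ℝ) ^ d) ^ (-(1 : ℝ) / 2) = c ^ (-(d : ℝ) / 2) := by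
    rw [← Real.rpow_natCast c d, ← Real.rpow_mul hc.le]
    ring_nf
  have h2 : (2 * Real.pi * c) ^ (-(d : ℝ) / 2)
      = (2 * Real.pi) ^ (-(d : ℝ) / 2) * c ^ (-(d : ℝ) / 2) :=
    Real.mul_rpow (by positivity) hc.le
  rw [h1, h2]
  ring_nf

lemma gauss_flip' {d : ℕ} {a : ℝ} (ha : 1 < a) (x y : EuclideanSpace ℝ (Fin d)) :
    gaussDensityE (a⁻¹ • y) ((1 - (a ^ 2)⁻¹) • 1) x
      = a ^ (d : ℝ) * gaussDensityE (a • x) ((a ^ 2 - 1) • 1) y := by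
  have ha0 : (0:ℝ) < a := lt_trans one_pos ha
  have hsq : (1:ℝ) < a ^ 2 := by nlinarith
  have hc : (0:ℝ) < 1 - (a ^ 2)⁻¹ := by
    have h2 : (a ^ 2)⁻¹ < 1 := by rw [inv_lt_one_iff₀]; right; exact hsq
    linarith
  have hc2 : (0:ℝ) < a ^ 2 - 1 := by nlinarith
  rw [gauss_smul_one hc, gauss_smul_one hc2]
  have hkey : a ^ 2 - 1 = a ^ 2 * (1 - (a ^ 2)⁻¹) := by field_simp
  have hnorm : ‖x - a⁻¹ • y‖ = a⁻¹ * ‖y - a • x‖ := by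
    have h : x - a⁻¹ • y = a⁻¹ • (a • x - y) := by
      rw [smul_sub, smul_smul, inv_mul_cancel₀ ha0.ne', one_smul]
    rw [h, norm_smul, norm_sub_rev, Real.norm_eq_abs, abs_of_pos (inv_pos.mpr ha0)]
  have hexp : -‖x - a⁻¹ • y‖ ^ 2 / (2 * (1 - (a ^ 2)⁻¹))
      = -‖y - a • x‖ ^ 2 / (2 * (a ^ 2 - 1)) := by
    rw [hnorm, hkey]
    field_simp
  rw [hexp]
  have h4 : ((a:ℝ) ^ 2) ^ (-(d : ℝ) / 2) = a ^ (-(d:ℝ)) := by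
    rw [← Real.rpow_natCast a 2, ← Real.rpow_mul ha0.le]
    congr 1
    ring
  have hY : 2 * Real.pi * (a ^ 2 - 1) = a ^ 2 * (2 * Real.pi * (1 - (a ^ 2)⁻¹)) := by
    rw [hkey]; ring
  have hconst : (2 * Real.pi * (a ^ 2 - 1)) ^ (-(d : ℝ) / 2)
      = a ^ (-(d:ℝ)) * (2 * Real.pi * (1 - (a ^ 2)⁻¹)) ^ (-(d : ℝ) / 2) := by
    rw [hY, Real.mul_rpow (by positivity) (by positivity), h4]
  rw [hconst, ← mul_assoc, ← mul_assoc, ← Real.rpow_add ha0]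
  simp

lemma exp_mul_self_le {c r : ℝ} (hc : 0 < c) (hr : 0 ≤ r) :
    r * Real.exp (-r ^ 2 / (2 * c)) ≤ Real.sqrt (2 * c) := by
  rcases le_or_gt r (Real.sqrt (2 * c)) with h | h
  · calc r * Real.exp (-r ^ 2 / (2 * c)) ≤ r * 1 := by
          apply mul_le_mul_of_nonneg_left _ hr
          rw [Real.exp_le_one_iff]
          have : 0 ≤ r^2 / (2*c) := by positivity
          linarith [neg_div (2*c) (r^2)]
       _ ≤ Real.sqrt (2 * c) := by linarith
  · have hr0 : 0 < r := lt_of_le_of_lt (Real.sqrt_nonneg _) h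
    have hexp : Real.exp (-r ^ 2 / (2 * c)) ≤ (r ^ 2 / (2 * c))⁻¹ := by
      rw [show -r ^ 2 / (2 * c) = -(r ^ 2 / (2 * c)) by ring, Real.exp_neg]
      apply inv_anti₀ (by positivity)
      calc r ^ 2 / (2 * c) ≤ r ^ 2 / (2 * c) + 1 := by linarith
        _ ≤ Real.exp (r ^ 2 / (2 * c)) := by
            have := Real.add_one_le_exp (r ^ 2 / (2 * c)); linarith
    calc r * Real.exp (-r ^ 2 / (2 * c)) ≤ r * (r ^ 2 / (2 * c))⁻¹ :=
          mul_le_mul_of_nonneg_left hexp hr0.le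
      _ = 2 * c / r := by field_simp
      _ ≤ Real.sqrt (2 * c) := by
          rw [div_le_iff₀ hr0]
          have h2 : Real.sqrt (2*c) * Real.sqrt (2*c) = 2*c := Real.mul_self_sqrt (by positivity)
          nlinarith [Real.sqrt_nonneg (2*c), h]

lemma hasFDerivAt_gaussexp {d : ℕ} {c : ℝ} (hc : 0 < c) (m x : EuclideanSpace ℝ (Fin d)) :
    HasFDerivAt (fun z : EuclideanSpace ℝ (Fin d) => Real.exp (-‖z - m‖ ^ 2 / (2 * c)))
      ((-c⁻¹ * Real.exp (-‖x - m‖ ^ 2 / (2 * c))) • innerSL ℝ (x - m)) x := by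
  have h1 : HasFDerivAt (fun z : EuclideanSpace ℝ (Fin d) => z - m)
      (ContinuousLinearMap.id ℝ _) x := (hasFDerivAt_id x).sub_const m
  have h2 := h1.norm_sq
  have h3 := ((h2.neg).const_mul ((2*c)⁻¹)).exp
  simp only [Pi.neg_apply] at h3
  rw [show (2*c)⁻¹ * -‖x - m‖ ^ 2 = -‖x - m‖ ^ 2 / (2*c) by ring] at h3
  have hf : (fun z : EuclideanSpace ℝ (Fin d) => Real.exp (-‖z - m‖ ^ 2 / (2 * c)))
      = fun z => Real.exp ((2 * c)⁻¹ * -‖z - m‖ ^ 2) := by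
    funext z
    congr 1
    ring
  rw [hf]
  refine h3.congr_fderiv ?_
  · ext v
    simp
    ring

set_option maxHeartbeats 2000000 in
/-- Monte Carlo score identity: for a probability density `π` on `ℝ^d` and `a > 1`, the density
`μ(x) = ∫ π(y) N(x; y/a, (1-a⁻²)I) dy` of `a⁻¹Y + √(1-a⁻²)Z` is `C¹`, and wherever `μ(x) > 0`
its score is `∇ log μ(x) = (a⁻¹/(1-a⁻²)) E_{y ∼ m(·|x)}[y - a x]`, where `m(·|x)` is the
probability density proportional to `y ↦ π(y) N(y; a x, (a²-1)I)`. -/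
theorem monte_carlo_score_identity
    {d : ℕ} (π : EuclideanSpace ℝ (Fin d) → ℝ)
    (hmeas : Measurable π) (hnn : ∀ y, 0 ≤ π y) (hint : ∫ y, π y = 1)
    (a : ℝ) (ha : 1 < a) :
    ContDiff ℝ 1 (fun x : EuclideanSpace ℝ (Fin d) =>
        ∫ y, π y * gaussDensityE (a⁻¹ • y) ((1 - (a ^ 2)⁻¹) • 1) x) ∧
    ∀ x : EuclideanSpace ℝ (Fin d),
      0 < (∫ y, π y * gaussDensityE (a⁻¹ • y) ((1 - (a ^ 2)⁻¹) • 1) x) →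
      gradient (fun z => Real.log
          (∫ y, π y * gaussDensityE (a⁻¹ • y) ((1 - (a ^ 2)⁻¹) • 1) z)) x =
        (a⁻¹ / (1 - (a ^ 2)⁻¹)) •
          ((∫ y, π y * gaussDensityE (a • x) ((a ^ 2 - 1) • 1) y)⁻¹ •
            ∫ y, (π y * gaussDensityE (a • x) ((a ^ 2 - 1) • 1) y) • (y - a • x)) := by
  classical
  have ha0 : (0:ℝ) < a := lt_trans one_pos ha
  have hsq : (1:ℝ) < a ^ 2 := by nlinarith
  set c : ℝ := 1 - (a ^ 2)⁻¹ with hcdef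
  have hc : 0 < c := by
    have h2 : (a ^ 2)⁻¹ < 1 := by rw [inv_lt_one_iff₀]; right; exact hsq
    rw [hcdef]; linarith
  have hπint : Integrable π := by
    by_contra h
    rw [integral_undef h] at hint
    norm_num at hint
  set K : ℝ := (2 * Real.pi * c) ^ (-(d:ℝ)/2) with hKdef
  have hK : 0 < K := by
    rw [hKdef]; exact Real.rpow_pos_of_pos (by positivity) _
  set F : EuclideanSpace ℝ (Fin d) → EuclideanSpace ℝ (Fin d) → ℝ :=
    fun x y => π y * (K * Real.exp (-‖x - a⁻¹ • y‖ ^ 2 / (2 * c))) with hFdef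
  have hpt : ∀ x y, π y * gaussDensityE (a⁻¹ • y) (c • 1) x = F x y := by
    intro x y
    rw [gauss_smul_one hc]
  set F' : EuclideanSpace ℝ (Fin d) → EuclideanSpace ℝ (Fin d) →
      (EuclideanSpace ℝ (Fin d) →L[ℝ] ℝ) :=
    fun x y => (-c⁻¹ * F x y) • innerSL ℝ (x - a⁻¹ • y) with hF'def
  -- basic facts
  have hF0 : ∀ x y, 0 ≤ F x y := fun x y =>
    mul_nonneg (hnn y) (by positivity)
  have hFle : ∀ x y, F x y ≤ K * π y := by
    intro x y
    simp only [hFdef]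
    have he : Real.exp (-‖x - a⁻¹ • y‖ ^ 2 / (2 * c)) ≤ 1 := by
      rw [Real.exp_le_one_iff]
      have : (0:ℝ) ≤ ‖x - a⁻¹ • y‖ ^ 2 / (2 * c) := by positivity
      have := neg_div (2*c) (‖x - a⁻¹ • y‖ ^ 2)
      nlinarith
    have h2 := mul_le_mul_of_nonneg_left he (mul_nonneg (hnn y) hK.le)
    nlinarith [h2]
  have hgcont : ∀ x, Continuous (fun y : EuclideanSpace ℝ (Fin d) =>
      K * Real.exp (-‖x - a⁻¹ • y‖ ^ 2 / (2 * c))) := by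
    intro x; fun_prop
  have hFmeas : ∀ x, AEStronglyMeasurable (F x) volume := by
    intro x
    simp only [hFdef]
    exact (hmeas.aestronglyMeasurable.mul (hgcont x).aestronglyMeasurable)
  have hFint : ∀ x, Integrable (F x) := by
    intro x
    refine (hπint.const_mul K).mono (hFmeas x) ?_
    refine ae_of_all _ fun y => ?_
    rw [Real.norm_eq_abs, Real.norm_eq_abs, abs_of_nonneg (hF0 x y),
      abs_of_nonneg (by nlinarith [hnn y, hK] : (0:ℝ) ≤ K * π y)]
    exact hFle x y
  -- bound for the derivative
  set B : ℝ := c⁻¹ * K * Real.sqrt (2*c) with hBdef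
  have hbound : ∀ x y, ‖F' x y‖ ≤ B * π y := by
    intro x y
    simp only [hF'def, hFdef, hBdef]
    beta_reduce
    rw [norm_smul ((-c⁻¹ * (π y * (K * Real.exp (-‖x - a⁻¹ • y‖ ^ 2 / (2 * c))))) : ℝ) (innerSL ℝ (x - a⁻¹ • y))]
    rw [innerSL_apply_norm, Real.norm_eq_abs, abs_mul, abs_neg,
      abs_of_nonneg (inv_pos.mpr hc).le, abs_of_nonneg (by have := hF0 x y; simp only [hFdef] at this; exact this)]
    have h1 := exp_mul_self_le hc (norm_nonneg (x - a⁻¹ • y))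
    have h2 : π y * (K * Real.exp (-‖x - a⁻¹ • y‖ ^ 2 / (2 * c))) * ‖x - a⁻¹ • y‖
        = π y * K * (‖x - a⁻¹ • y‖ * Real.exp (-‖x - a⁻¹ • y‖ ^ 2 / (2 * c))) := by ring
    have h3 : π y * K * (‖x - a⁻¹ • y‖ * Real.exp (-‖x - a⁻¹ • y‖ ^ 2 / (2 * c)))
        ≤ π y * K * Real.sqrt (2*c) := by
      apply mul_le_mul_of_nonneg_left h1 (by nlinarith [hnn y, hK])
    calc c⁻¹ * (π y * (K * Real.exp (-‖x - a⁻¹ • y‖ ^ 2 / (2 * c)))) * ‖x - a⁻¹ • y‖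
        = c⁻¹ * (π y * (K * Real.exp (-‖x - a⁻¹ • y‖ ^ 2 / (2 * c))) * ‖x - a⁻¹ • y‖) := by ring
      _ ≤ c⁻¹ * (π y * K * Real.sqrt (2*c)) := by
          apply mul_le_mul_of_nonneg_left _ (inv_pos.mpr hc).le
          rw [h2]; exact h3
      _ = c⁻¹ * K * Real.sqrt (2*c) * π y := by ring
  have hvcont : ∀ x₀ : EuclideanSpace ℝ (Fin d),
      Continuous (fun y : EuclideanSpace ℝ (Fin d) => innerSL ℝ (x₀ - a⁻¹ • y)) := by
    intro x₀
    exact (innerSL ℝ).continuous.comp (by fun_prop)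
  have hF'meas : ∀ x, AEStronglyMeasurable (F' x) volume := by
    intro x
    simp only [hF'def]
    exact AEStronglyMeasurable.smul
      ((aestronglyMeasurable_const.mul (hFmeas x)))
      ((hvcont x).aestronglyMeasurable)
  have hBint : Integrable (fun y => B * π y) := hπint.const_mul B
  -- pointwise differentiability
  have hdiff : ∀ (y x : EuclideanSpace ℝ (Fin d)), HasFDerivAt (fun x => F x y) (F' x y) x := by
    intro y x
    have h := (hasFDerivAt_gaussexp hc (a⁻¹ • y) x).const_mul (π y * K)
    have h2 : (fun z : EuclideanSpace ℝ (Fin d) =>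
        π y * K * Real.exp (-‖z - a⁻¹ • y‖ ^ 2 / (2 * c))) = fun z => F z y := by
      funext z; simp only [hFdef]; ring
    rw [h2] at h
    refine h.congr_fderiv ?_
    simp only [hF'def, hFdef]
    rw [smul_smul]
    congr 1
    ring
  -- the key derivative of the integral
  have key : ∀ x₀, HasFDerivAt (fun x => ∫ y, F x y) (∫ y, F' x₀ y) x₀ := by
    intro x₀
    exact hasFDerivAt_integral_of_dominated_of_fderiv_le (s := Set.univ) Filter.univ_mem
      (Filter.Eventually.of_forall fun x => hFmeas x)
      (hFint x₀) (hF'meas x₀)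
      (ae_of_all _ fun y x _ => hbound x y)
      hBint
      (ae_of_all _ fun y x _ => hdiff y x)
  have hcontF' : Continuous fun x => ∫ y, F' x y := by
    apply continuous_of_dominated hF'meas (fun x => ae_of_all _ fun y => hbound x y) hBint
    refine ae_of_all _ fun y => ?_
    simp only [hF'def]
    apply Continuous.smul (f := fun x => -c⁻¹ * F x y) (g := fun x => innerSL ℝ (x - a⁻¹ • y))
    · simp only [hFdef]; fun_prop
    · exact (innerSL ℝ).continuous.comp (by fun_prop)
  simp only [hpt]
  constructor
  · rw [contDiff_one_iff_fderiv]
    refine ⟨fun x => (key x).differentiableAt, ?_⟩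
    have : fderiv ℝ (fun x => ∫ y, F x y) = fun x => ∫ y, F' x y :=
      funext fun x => (key x).fderiv
    rw [this]
    exact hcontF'
  · intro x hx
    have hne : (∫ y, F x y) ≠ 0 := ne_of_gt hx
    set I2 : ℝ := ∫ y, π y * gaussDensityE (a • x) ((a ^ 2 - 1) • 1) y with hI2
    set w : EuclideanSpace ℝ (Fin d) :=
      ∫ y, (π y * gaussDensityE (a • x) ((a ^ 2 - 1) • 1) y) • (y - a • x) with hw
    set A : ℝ := a ^ (d : ℝ) with hAdef
    have hA : 0 < A := Real.rpow_pos_of_pos ha0 _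
    have hflipF : ∀ y, F x y = A * (π y * gaussDensityE (a • x) ((a ^ 2 - 1) • 1) y) := by
      intro y
      rw [← hpt x y, hcdef, gauss_flip' ha x y, hAdef]
      ring
    set V : EuclideanSpace ℝ (Fin d) → EuclideanSpace ℝ (Fin d) :=
      fun y => (-c⁻¹ * F x y) • (x - a⁻¹ • y) with hVdef
    have h1 : ∀ y, F' x y =
        (InnerProductSpace.toDual ℝ (EuclideanSpace ℝ (Fin d))).toLinearIsometry (V y) := by
      intro y
      ext u
      simp only [hF'def, hVdef, LinearIsometryEquiv.coe_toLinearIsometry,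
        ContinuousLinearMap.coe_smul', Pi.smul_apply, innerSL_apply_apply,
        InnerProductSpace.toDual_apply_apply, real_inner_smul_left, smul_eq_mul]
    have htd : ∫ y, F' x y =
        (InnerProductSpace.toDual ℝ (EuclideanSpace ℝ (Fin d))) (∫ y, V y) := by
      calc ∫ y, F' x y
          = ∫ y, (InnerProductSpace.toDual ℝ (EuclideanSpace ℝ (Fin d))).toLinearIsometry
              (V y) := by simp only [h1]
        _ = (InnerProductSpace.toDual ℝ (EuclideanSpace ℝ (Fin d))).toLinearIsometry
              (∫ y, V y) := LinearIsometry.integral_comp_comm _ _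
        _ = _ := rfl
    have hgrad : HasGradientAt (fun z => Real.log (∫ y, F z y))
        ((∫ y, F x y)⁻¹ • ∫ y, V y) x := by
      rw [hasGradientAt_iff_hasFDerivAt]
      have h2 : (InnerProductSpace.toDual ℝ (EuclideanSpace ℝ (Fin d)))
          ((∫ y, F x y)⁻¹ • ∫ y, V y) = (∫ y, F x y)⁻¹ • ∫ y, F' x y := by
        rw [_root_.map_smul, ← htd]
      rw [h2]
      exact (key x).log hne
    rw [hgrad.gradient]
    have hfx : (∫ y, F x y) = A * I2 := by
      rw [hI2]
      calc (∫ y, F x y)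
          = ∫ y, A * (π y * gaussDensityE (a • x) ((a ^ 2 - 1) • 1) y) := by
            simp only [hflipF]
        _ = A * ∫ y, π y * gaussDensityE (a • x) ((a ^ 2 - 1) • 1) y :=
            integral_const_mul A _
    have hVeq : ∀ y, V y = (c⁻¹ * A * a⁻¹) •
        ((π y * gaussDensityE (a • x) ((a ^ 2 - 1) • 1) y) • (y - a • x)) := by
      intro y
      have hxy : x - a⁻¹ • y = (-a⁻¹) • (y - a • x) := by
        rw [neg_smul, smul_sub, smul_smul, inv_mul_cancel₀ ha0.ne', one_smul]
        abel
      simp only [hVdef]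
      rw [hflipF y, hxy, smul_smul, smul_smul]
      congr 1
      ring
    have hintV : (∫ y, V y) = (c⁻¹ * A * a⁻¹) • w := by
      rw [hw]
      calc (∫ y, V y)
          = ∫ y, (c⁻¹ * A * a⁻¹) •
              ((π y * gaussDensityE (a • x) ((a ^ 2 - 1) • 1) y) • (y - a • x)) := by
            simp only [hVeq]
        _ = (c⁻¹ * A * a⁻¹) •
            ∫ y, (π y * gaussDensityE (a • x) ((a ^ 2 - 1) • 1) y) • (y - a • x) :=
            integral_smul _ _
    rw [hfx, hintV, smul_smul, smul_smul]
    congr 1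
    rw [mul_inv, div_eq_mul_inv]
    have h5 : A⁻¹ * A = 1 := inv_mul_cancel₀ hA.ne'
    linear_combination (I2⁻¹ * c⁻¹ * a⁻¹) * h5
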